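/- Let (M, 𝓛) be a finite linear space in which every line is either affine or projective, and suppose that both an affine line and a projective line exist. Then the affine lines of 𝓛 are pairwise disjoint and every point of M lies on exactly one affine line. -/

import Mathlib

/-- A linear space: a point set `M` together with a collection of lines (subsets of `M`)
such that every line has at least 3 points, any two distinct points lie on exactly one
common line, and every point lies on at least 3 lines. -/
structure LinearSpace (M : Type*) where
  lines : Set (Set M)
  exists_three_points : ∀ L ∈ lines, ∃ a b c : M,
    a ∈ L ∧ b ∈ L ∧ c ∈ L ∧ a ≠ b ∧ a ≠ c ∧ b ≠ c
  join_unique : ∀ p q : M, p ≠ q → ∃! L, L ∈ lines ∧ p ∈ L ∧ q ∈ L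
  exists_three_lines : ∀ p : M, ∃ L₁ L₂ L₃, L₁ ∈ lines ∧ L₂ ∈ lines ∧ L₃ ∈ lines ∧
    p ∈ L₁ ∧ p ∈ L₂ ∧ p ∈ L₃ ∧ L₁ ≠ L₂ ∧ L₁ ≠ L₃ ∧ L₂ ≠ L₃

namespace LinearSpace

variable {M : Type*}

/-- Two lines are parallel if they are equal or disjoint. -/
def Parallel (L K : Set M) : Prop := L = K ∨ L ∩ K = ∅

/-- A line `L` is affine if for every point `p ∉ L` there is exactly one line
through `p` disjoint from `L`. -/
def IsAffine (S : LinearSpace M) (L : Set M) : Prop :=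
  L ∈ S.lines ∧ ∀ p ∉ L, ∃! K, K ∈ S.lines ∧ p ∈ K ∧ K ∩ L = ∅

/-- A line is projective if it meets every other line. -/
def IsProjective (S : LinearSpace M) (L : Set M) : Prop :=
  L ∈ S.lines ∧ ∀ K ∈ S.lines, K ≠ L → (L ∩ K).Nonempty

/-- An affine line is biaffine if every line parallel to it is also affine. -/
def IsBiaffine (S : LinearSpace M) (L : Set M) : Prop :=
  S.IsAffine L ∧ ∀ K ∈ S.lines, Parallel K L → S.IsAffine K

end LinearSpace

open LinearSpace

namespace LinearSpace

set_option linter.unusedSectionVars false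

variable {M : Type*} (S : LinearSpace M)

/-- Two distinct lines meet in at most one point. -/
lemma inter_subsingleton {L K : Set M} (hL : L ∈ S.lines) (hK : K ∈ S.lines)
    (hne : L ≠ K) : (L ∩ K).Subsingleton := by
  intro p hp q hq
  by_contra h
  obtain ⟨N, _, hu⟩ := S.join_unique p q h
  exact hne ((hu L ⟨hL, hp.1, hq.1⟩).trans (hu K ⟨hK, hp.2, hq.2⟩).symm)

open Classical in
/-- The line joining two distinct points. -/
noncomputable def join (p q : M) : Set M :=
  if h : p = q then ∅ else (S.join_unique p q h).choose

lemma join_spec {p q : M} (h : p ≠ q) :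
    S.join p q ∈ S.lines ∧ p ∈ S.join p q ∧ q ∈ S.join p q := by
  rw [join, dif_neg h]
  exact (S.join_unique p q h).choose_spec.1

lemma join_eq {p q : M} (h : p ≠ q) {K : Set M} (hK : K ∈ S.lines) (hp : p ∈ K)
    (hq : q ∈ K) : K = S.join p q := by
  rw [join, dif_neg h]
  exact (S.join_unique p q h).choose_spec.2 K ⟨hK, hp, hq⟩

/-- From the three lines through a point, get one different from a given line. -/
lemma exists_line_ne (a : M) (L : Set M) : ∃ K ∈ S.lines, a ∈ K ∧ K ≠ L := by
  obtain ⟨L₁, L₂, L₃, h₁, h₂, h₃, m₁, m₂, m₃, n₁₂, n₁₃, n₂₃⟩ := S.exists_three_lines a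
  by_cases e1 : L₁ = L
  · by_cases e2 : L₂ = L
    · exact absurd (e1.trans e2.symm) n₁₂
    · exact ⟨L₂, h₂, m₂, e2⟩
  · exact ⟨L₁, h₁, m₁, e1⟩

/-- Every line has an external point. -/
lemma exists_not_mem {L : Set M} (hL : L ∈ S.lines) : ∃ p, p ∉ L := by
  obtain ⟨a, b, c, ha, hb, hc, hab, hac, hbc⟩ := S.exists_three_points L hL
  obtain ⟨K, hK, haK, hKL⟩ := S.exists_line_ne a L
  obtain ⟨x, y, z, hx, hy, hz, hxy, hxz, hyz⟩ := S.exists_three_points K hK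
  have hsub := S.inter_subsingleton hK hL hKL
  by_contra hall
  push_neg at hall
  exact hxy (hsub ⟨hx, hall x⟩ ⟨hy, hall y⟩)

/-- Every point misses some line. -/
lemma exists_line_not_mem (p : M) : ∃ L ∈ S.lines, p ∉ L := by
  obtain ⟨L₁, L₂, L₃, h₁, h₂, h₃, m₁, m₂, m₃, n₁₂, n₁₃, n₂₃⟩ := S.exists_three_lines p
  obtain ⟨a, b, c, ha, hb, hc, hab, hac, hbc⟩ := S.exists_three_points L₁ h₁
  have hx : ∃ x ∈ L₁, x ≠ p := by
    by_cases e : a = p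
    · exact ⟨b, hb, fun h => hab (e.trans h.symm)⟩
    · exact ⟨a, ha, e⟩
  obtain ⟨x, hx, hxp⟩ := hx
  obtain ⟨K, hK, hxK, hKL⟩ := S.exists_line_ne x L₁
  refine ⟨K, hK, fun hpK => ?_⟩
  exact hxp (S.inter_subsingleton hK h₁ hKL ⟨hxK, hx⟩ ⟨hpK, m₁⟩)

/-- No line is both affine and projective. -/
lemma not_affine_and_projective {L : Set M} (hA : S.IsAffine L)
    (hP : S.IsProjective L) : False := by
  obtain ⟨p, hp⟩ := S.exists_not_mem hA.1
  obtain ⟨K, ⟨hK, hpK, hKL⟩, _⟩ := hA.2 p hp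
  have hne : K ≠ L := fun h => hp (h ▸ hpK)
  obtain ⟨x, hx⟩ := hP.2 K hK hne
  exact absurd (Set.mem_inter hx.2 hx.1) (hKL ▸ id)

end LinearSpace

namespace LinearSpace

variable {M : Type*} (S : LinearSpace M)

/-- The set of lines through a point. -/
def LT (p : M) : Set (Set M) := {K | K ∈ S.lines ∧ p ∈ K}

variable [Finite M]

set_option linter.unusedSectionVars false

/-- Lines through an external point meeting `L` are in bijection with `L`. -/
lemma ncard_meet {L : Set M} (hL : L ∈ S.lines) {p : M} (hp : p ∉ L) :
    {K | K ∈ S.lines ∧ p ∈ K ∧ (K ∩ L).Nonempty}.ncard = L.ncard := by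
  have himg : {K | K ∈ S.lines ∧ p ∈ K ∧ (K ∩ L).Nonempty} = S.join p '' L := by
    ext K
    constructor
    · rintro ⟨hK, hpK, q, hqK, hqL⟩
      have hpq : p ≠ q := fun h => hp (h ▸ hqL)
      exact ⟨q, hqL, (S.join_eq hpq hK hpK hqK).symm⟩
    · rintro ⟨q, hqL, rfl⟩
      have hpq : p ≠ q := fun h => hp (h ▸ hqL)
      obtain ⟨h1, h2, h3⟩ := S.join_spec hpq
      exact ⟨h1, h2, q, h3, hqL⟩
  rw [himg]
  apply Set.ncard_image_of_injOn
  intro q hq q' hq' he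
  have hpq : p ≠ q := fun h => hp (h ▸ hq)
  have hpq' : p ≠ q' := fun h => hp (h ▸ hq')
  obtain ⟨h1, h2, h3⟩ := S.join_spec hpq
  obtain ⟨h1', h2', h3'⟩ := S.join_spec hpq'
  have hne : S.join p q ≠ L := fun h => hp (h ▸ h2)
  exact S.inter_subsingleton h1 hL hne ⟨h3, hq⟩ ⟨he ▸ h3', hq'⟩

lemma LT_split {L : Set M} (p : M) :
    S.LT p = {K | K ∈ S.lines ∧ p ∈ K ∧ (K ∩ L).Nonempty}
      ∪ {K | K ∈ S.lines ∧ p ∈ K ∧ K ∩ L = ∅} := by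
  ext K
  simp only [LT, Set.mem_setOf_eq, Set.mem_union]
  constructor
  · rintro ⟨h1, h2⟩
    rcases Set.eq_empty_or_nonempty (K ∩ L) with h | h
    · exact Or.inr ⟨h1, h2, h⟩
    · exact Or.inl ⟨h1, h2, h⟩
  · rintro (⟨h1, h2, _⟩ | ⟨h1, h2, _⟩) <;> exact ⟨h1, h2⟩

/-- If `L` is affine and `p ∉ L`, there are `|L| + 1` lines through `p`. -/
lemma LT_ncard_affine {L : Set M} (hA : S.IsAffine L) {p : M} (hp : p ∉ L) :
    (S.LT p).ncard = L.ncard + 1 := by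
  obtain ⟨K₀, hK₀, hu⟩ := hA.2 p hp
  have hsing : {K | K ∈ S.lines ∧ p ∈ K ∧ K ∩ L = ∅} = {K₀} := by
    ext K
    exact ⟨fun h => hu K h, fun h => h ▸ hK₀⟩
  rw [S.LT_split (L := L) p, Set.ncard_union_eq, S.ncard_meet hA.1 hp, hsing,
    Set.ncard_singleton]
  rw [Set.disjoint_left]
  rintro K ⟨_, _, h⟩ ⟨_, _, h'⟩
  exact Set.not_nonempty_empty (h' ▸ h)

/-- If `L` is projective and `p ∉ L`, there are `|L|` lines through `p`. -/
lemma LT_ncard_projective {L : Set M} (hP : S.IsProjective L) {p : M} (hp : p ∉ L) :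
    (S.LT p).ncard = L.ncard := by
  have hempty : {K | K ∈ S.lines ∧ p ∈ K ∧ K ∩ L = ∅} = (∅ : Set (Set M)) := by
    ext K
    simp only [Set.mem_setOf_eq, Set.mem_empty_iff_false, iff_false]
    rintro ⟨h1, h2, h3⟩
    have hne : K ≠ L := fun h => hp (h ▸ h2)
    obtain ⟨x, hx⟩ := hP.2 K h1 hne
    have hm : x ∈ K ∩ L := ⟨hx.2, hx.1⟩
    rw [h3] at hm
    exact hm
  rw [S.LT_split (L := L) p, hempty, Set.union_empty, S.ncard_meet hP.1 hp]

end LinearSpace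

namespace LinearSpace

variable {M : Type*} (S : LinearSpace M)

set_option linter.unusedSectionVars false

/-- Given two distinct lines, there is a point off both. -/
lemma exists_not_mem_pair {A P : Set M} (hA : A ∈ S.lines) (hP : P ∈ S.lines)
    (hAP : A ≠ P) : ∃ p, p ∉ A ∧ p ∉ P := by
  have sAP := S.inter_subsingleton hA hP hAP
  obtain ⟨a, b, c, ha, hb, hc, hab, hac, hbc⟩ := S.exists_three_points A hA
  have hq : ∃ q ∈ A, q ∉ P := by
    by_cases haP : a ∈ P
    · by_cases hbP : b ∈ P
      · exact absurd (sAP ⟨ha, haP⟩ ⟨hb, hbP⟩) hab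
      · exact ⟨b, hb, hbP⟩
    · exact ⟨a, ha, haP⟩
  obtain ⟨q, hqA, hqP⟩ := hq
  obtain ⟨K, hK, hqK, hKA⟩ := S.exists_line_ne q A
  have hKP : K ≠ P := fun h => hqP (h ▸ hqK)
  have sA := S.inter_subsingleton hK hA hKA
  have sP := S.inter_subsingleton hK hP hKP
  obtain ⟨x, y, z, hx, hy, hz, hxy, hxz, hyz⟩ := S.exists_three_points K hK
  by_contra h
  push_neg at h
  have hx' : x ∈ A ∨ x ∈ P := or_iff_not_imp_left.mpr (h x)
  have hy' : y ∈ A ∨ y ∈ P := or_iff_not_imp_left.mpr (h y)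
  have hz' : z ∈ A ∨ z ∈ P := or_iff_not_imp_left.mpr (h z)
  rcases hx' with hxA | hxP <;> rcases hy' with hyA | hyP <;> rcases hz' with hzA | hzP <;>
    first
      | exact hxy (sA ⟨hx, hxA⟩ ⟨hy, hyA⟩)
      | exact hxz (sA ⟨hx, hxA⟩ ⟨hz, hzA⟩)
      | exact hyz (sA ⟨hy, hyA⟩ ⟨hz, hzA⟩)
      | exact hxy (sP ⟨hx, hxP⟩ ⟨hy, hyP⟩)
      | exact hxz (sP ⟨hx, hxP⟩ ⟨hz, hzP⟩)
      | exact hyz (sP ⟨hy, hyP⟩ ⟨hz, hzP⟩)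

variable [Finite M]

lemma proj_ncard_eq {A P : Set M} (hA : S.IsAffine A) (hP : S.IsProjective P) :
    P.ncard = A.ncard + 1 := by
  have hAP : A ≠ P := fun h => S.not_affine_and_projective hA (h ▸ hP)
  obtain ⟨p, hpA, hpP⟩ := S.exists_not_mem_pair hA.1 hP.1 hAP
  rw [← S.LT_ncard_projective hP hpP, S.LT_ncard_affine hA hpA]

end LinearSpace

namespace LinearSpace

/-- Counting a disjoint union. -/
lemma ncard_partition {M : Type*} [Finite M] (𝒞 : Finset (Set M)) :
    ∀ T : Set M, (∀ K ∈ 𝒞, ∀ K' ∈ 𝒞, K ≠ K' → K ∩ K' = ∅) →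
      ((⋃ K ∈ 𝒞, K) = T) → T.ncard = ∑ K ∈ 𝒞, K.ncard := by
  induction 𝒞 using Finset.cons_induction with
  | empty => intro T _ hU; simp only [Finset.notMem_empty, Set.iUnion_of_empty,
      Set.iUnion_empty] at hU; simp [← hU]
  | cons a s ha ih =>
    intro T hdisj hU
    rw [Finset.sum_cons]
    have hU' : a ∪ ⋃ K ∈ s, K = T := by
      rw [← hU]; simp [Set.iUnion_or, Set.iUnion_union_distrib]
    rw [← hU', Set.ncard_union_eq ?dis,
      ih _ (fun K hK K' hK' h => hdisj K (Finset.mem_cons_of_mem hK)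
        K' (Finset.mem_cons_of_mem hK') h) rfl]
    case dis =>
      rw [Set.disjoint_left]
      intro x hxa hxU
      simp only [Set.mem_iUnion] at hxU
      obtain ⟨K, hK, hxK⟩ := hxU
      have hne : a ≠ K := fun h => ha (h ▸ hK)
      have hd := hdisj a (Finset.mem_cons_self a s) K (Finset.mem_cons_of_mem hK) hne
      have : x ∈ a ∩ K := ⟨hxa, hxK⟩
      rw [hd] at this
      exact this

variable {M : Type*} (S : LinearSpace M)

/-- Affine lines through a point. -/
def Athrough (x : M) : Set (Set M) := {A | S.IsAffine A ∧ x ∈ A}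

/-- Projective lines through a point. -/
def Pthrough (x : M) : Set (Set M) := {P | S.IsProjective P ∧ x ∈ P}

set_option linter.unusedSectionVars false

lemma LT_eq_union (hdich : ∀ L ∈ S.lines, S.IsAffine L ∨ S.IsProjective L) (p : M) :
    S.LT p = S.Athrough p ∪ S.Pthrough p := by
  ext K
  constructor
  · rintro ⟨h1, h2⟩
    rcases hdich K h1 with h | h
    · exact Or.inl ⟨h, h2⟩
    · exact Or.inr ⟨h, h2⟩
  · rintro (⟨h, h2⟩ | ⟨h, h2⟩)
    · exact ⟨h.1, h2⟩
    · exact ⟨h.1, h2⟩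

lemma Athrough_disj_Pthrough (p : M) : Disjoint (S.Athrough p) (S.Pthrough p) := by
  rw [Set.disjoint_left]
  rintro K ⟨h1, _⟩ ⟨h2, _⟩
  exact S.not_affine_and_projective h1 h2

variable [Finite M]

lemma ap_add_tp (hdich : ∀ L ∈ S.lines, S.IsAffine L ∨ S.IsProjective L) (p : M) :
    (S.Athrough p).ncard + (S.Pthrough p).ncard = (S.LT p).ncard := by
  rw [S.LT_eq_union hdich p, Set.ncard_union_eq (S.Athrough_disj_Pthrough p)]

end LinearSpace

namespace LinearSpace

lemma ncard_diff_add_one {α : Type*} [Finite α] {s : Set α} {a : α} (h : a ∈ s) :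
    (s \ {a}).ncard + 1 = s.ncard := by
  rw [← Set.ncard_insert_of_notMem (fun h' => h'.2 rfl), Set.insert_diff_singleton,
    Set.insert_eq_of_mem h]

variable {M : Type*} (S : LinearSpace M)

set_option linter.unusedSectionVars false

lemma line_ncard_pos [Finite M] {L : Set M} (hL : L ∈ S.lines) : 1 ≤ L.ncard := by
  obtain ⟨a, b, c, ha, _⟩ := S.exists_three_points L hL
  have : L.Nonempty := ⟨a, ha⟩
  have := Set.ncard_pos (Set.toFinite L) |>.mpr this
  omega

variable [Finite M] {A0 P0 : Set M}

lemma affine_ncard (hA0 : S.IsAffine A0) (hP0 : S.IsProjective P0)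
    {A : Set M} (hA : S.IsAffine A) : A.ncard = A0.ncard := by
  have h1 := S.proj_ncard_eq hA hP0
  have h2 := S.proj_ncard_eq hA0 hP0
  omega

lemma LT_ncard (hdich : ∀ L ∈ S.lines, S.IsAffine L ∨ S.IsProjective L)
    (hA0 : S.IsAffine A0) (hP0 : S.IsProjective P0) (p : M) :
    (S.LT p).ncard = A0.ncard + 1 := by
  obtain ⟨L, hL, hpL⟩ := S.exists_line_not_mem p
  rcases hdich L hL with h | h
  · rw [S.LT_ncard_affine h hpL, S.affine_ncard hA0 hP0 h]
  · rw [S.LT_ncard_projective h hpL, S.proj_ncard_eq hA0 h]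

/-- The fundamental count: `|M| = n² + t_p` where `t_p` is the number of projective
lines through `p`. -/
lemma univ_count (hdich : ∀ L ∈ S.lines, S.IsAffine L ∨ S.IsProjective L)
    (hA0 : S.IsAffine A0) (hP0 : S.IsProjective P0) (p : M) :
    (Set.univ : Set M).ncard = A0.ncard * A0.ncard + (S.Pthrough p).ncard := by
  classical
  obtain ⟨k, hk⟩ : ∃ k, A0.ncard = k + 1 := ⟨A0.ncard - 1, by
    have := S.line_ncard_pos hA0.1; omega⟩
  set Fa := (Set.toFinite (S.Athrough p)).toFinset with hFa
  set Fp := (Set.toFinite (S.Pthrough p)).toFinset with hFp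
  have hFdisj : Disjoint Fa Fp := by
    rw [Finset.disjoint_left]
    intro K h1 h2
    rw [hFa, Set.Finite.mem_toFinset] at h1
    rw [hFp, Set.Finite.mem_toFinset] at h2
    exact S.not_affine_and_projective h1.1 h2.1
  set F := Fa ∪ Fp with hF
  have hmemF : ∀ K, K ∈ F ↔ K ∈ S.LT p := by
    intro K
    rw [hF, Finset.mem_union, hFa, hFp, Set.Finite.mem_toFinset, Set.Finite.mem_toFinset,
      S.LT_eq_union hdich p]
    exact (Set.mem_union K _ _).symm
  have hthrough : ∀ K ∈ F, p ∈ K ∧ K ∈ S.lines := by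
    intro K hK
    have := (hmemF K).mp hK
    exact ⟨this.2, this.1⟩
  have hins : ∀ K ∈ F, insert p (K \ {p}) = K := by
    intro K hK
    rw [Set.insert_diff_singleton, Set.insert_eq_of_mem (hthrough K hK).1]
  -- injectivity of K ↦ K \ {p} on F
  have hinj : ∀ K ∈ F, ∀ K' ∈ F, K \ {p} = K' \ {p} → K = K' := by
    intro K hK K' hK' h
    rw [← hins K hK, ← hins K' hK', h]
  -- the image partition
  set 𝒟 := F.image (fun K => K \ {p}) with h𝒟
  have hU : (⋃ D ∈ 𝒟, D) = Set.univ \ {p} := by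
    ext x
    simp only [Set.mem_iUnion, h𝒟, Finset.mem_image, Set.mem_diff, Set.mem_univ,
      Set.mem_singleton_iff, true_and]
    constructor
    · rintro ⟨D, ⟨K, hK, rfl⟩, hxD⟩
      exact hxD.2
    · intro hxp
      have hpx : p ≠ x := fun h => hxp h.symm
      obtain ⟨h1, h2, h3⟩ := S.join_spec hpx
      refine ⟨S.join p x \ {p}, ⟨S.join p x, ?_, rfl⟩, h3, hxp⟩
      exact (hmemF _).mpr ⟨h1, h2⟩
  have hDdisj : ∀ D ∈ 𝒟, ∀ D' ∈ 𝒟, D ≠ D' → D ∩ D' = ∅ := by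
    intro D hD D' hD' hne
    rw [h𝒟, Finset.mem_image] at hD hD'
    obtain ⟨K, hK, rfl⟩ := hD
    obtain ⟨K', hK', rfl⟩ := hD'
    have hKK' : K ≠ K' := fun h => hne (h ▸ rfl)
    have hsub := S.inter_subsingleton (hthrough K hK).2 (hthrough K' hK').2 hKK'
    have hpKK' : p ∈ K ∩ K' := ⟨(hthrough K hK).1, (hthrough K' hK').1⟩
    apply Set.eq_empty_iff_forall_notMem.mpr
    rintro x ⟨⟨hxK, hxp⟩, ⟨hxK', _⟩⟩
    exact hxp (hsub ⟨hxK, hxK'⟩ hpKK')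
  have hcount := ncard_partition 𝒟 (Set.univ \ {p}) hDdisj hU
  rw [h𝒟, Finset.sum_image hinj] at hcount
  -- evaluate the sum
  have htermA : ∀ K ∈ Fa, (K \ {p}).ncard = k := by
    intro K hK
    have hKa : S.IsAffine K ∧ p ∈ K := by rwa [hFa, Set.Finite.mem_toFinset] at hK
    have h1 : (K \ {p}).ncard + 1 = K.ncard := ncard_diff_add_one hKa.2
    have h2 : K.ncard = k + 1 := (S.affine_ncard hA0 hP0 hKa.1).trans hk
    omega
  have hsumFa : ∑ K ∈ Fa, (K \ {p}).ncard = Fa.card * k := by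
    calc ∑ K ∈ Fa, (K \ {p}).ncard = ∑ _K ∈ Fa, k := Finset.sum_congr rfl htermA
      _ = Fa.card * k := by rw [Finset.sum_const, smul_eq_mul]
  have htermP : ∀ K ∈ Fp, (K \ {p}).ncard = k + 1 := by
    intro K hK
    have hKp : S.IsProjective K ∧ p ∈ K := by rwa [hFp, Set.Finite.mem_toFinset] at hK
    have h1 : (K \ {p}).ncard + 1 = K.ncard := ncard_diff_add_one hKp.2
    have h2 : K.ncard = k + 2 := by have := S.proj_ncard_eq hA0 hKp.1; omega
    omega
  have hsumFp : ∑ K ∈ Fp, (K \ {p}).ncard = Fp.card * (k + 1) := by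
    calc ∑ K ∈ Fp, (K \ {p}).ncard = ∑ _K ∈ Fp, (k + 1) := Finset.sum_congr rfl htermP
      _ = Fp.card * (k + 1) := by rw [Finset.sum_const, smul_eq_mul]
  rw [hF, Finset.sum_union hFdisj, hsumFa, hsumFp] at hcount
  -- cards of Fa, Fp
  have hap : (S.Athrough p).ncard = Fa.card := Set.ncard_eq_toFinset_card _ _
  have htp : (S.Pthrough p).ncard = Fp.card := Set.ncard_eq_toFinset_card _ _
  have hsum2 : Fa.card + Fp.card = k + 2 := by
    have := S.ap_add_tp hdich p
    rw [hap, htp, S.LT_ncard hdich hA0 hP0 p, hk] at this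
    omega
  -- |univ| = |univ \ {p}| + 1
  have huniv : (Set.univ \ {p} : Set M).ncard + 1 = (Set.univ : Set M).ncard :=
    ncard_diff_add_one (Set.mem_univ p)
  -- final algebra
  have hkey : k * (Fa.card + Fp.card) = k * (k + 2) := by rw [hsum2]
  rw [htp, hk]
  calc (Set.univ : Set M).ncard
      = Fa.card * k + Fp.card * (k + 1) + 1 := by omega
    _ = k * (Fa.card + Fp.card) + Fp.card + 1 := by ring
    _ = k * (k + 2) + Fp.card + 1 := by rw [hkey]
    _ = (k + 1) * (k + 1) + Fp.card := by ring

end LinearSpace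

namespace LinearSpace

variable {M : Type*} (S : LinearSpace M) [Finite M] {A0 P0 : Set M}

set_option linter.unusedSectionVars false

/-- The parallel class of an affine line partitions the points, so `n ∣ |M|`. -/
lemma dvd_univ_ncard (hdich : ∀ L ∈ S.lines, S.IsAffine L ∨ S.IsProjective L)
    (hA0 : S.IsAffine A0) (hP0 : S.IsProjective P0) :
    A0.ncard ∣ (Set.univ : Set M).ncard := by
  classical
  set Pc := ({A0} ∪ {K | K ∈ S.lines ∧ K ∩ A0 = ∅} : Set (Set M)) with hPc
  set G := (Set.toFinite Pc).toFinset with hG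
  have hA0ne : A0.Nonempty := by
    obtain ⟨a, b, c, ha, _⟩ := S.exists_three_points A0 hA0.1
    exact ⟨a, ha⟩
  have hmem : ∀ K, K ∈ G ↔ (K = A0 ∨ (K ∈ S.lines ∧ K ∩ A0 = ∅)) := by
    intro K
    rw [hG, Set.Finite.mem_toFinset, hPc, Set.mem_union, Set.mem_singleton_iff]
    rfl
  have hlines : ∀ K ∈ G, K ∈ S.lines ∧ K.ncard = A0.ncard := by
    intro K hK
    rcases (hmem K).mp hK with rfl | ⟨h1, h2⟩
    · exact ⟨hA0.1, rfl⟩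
    · have hne : K ≠ A0 := by
        rintro rfl
        rw [Set.inter_self] at h2
        exact hA0ne.ne_empty h2
      have haff : S.IsAffine K := by
        rcases hdich K h1 with h | h
        · exact h
        · exfalso
          obtain ⟨x, hx⟩ := h.2 A0 hA0.1 (fun he => hne he.symm)
          rw [h2] at hx
          exact hx
      exact ⟨h1, S.affine_ncard hA0 hP0 haff⟩
  have hdisjG : ∀ K ∈ G, ∀ K' ∈ G, K ≠ K' → K ∩ K' = ∅ := by
    intro K hK K' hK' hne
    rcases (hmem K).mp hK with rfl | ⟨h1, h2⟩
    · rcases (hmem K').mp hK' with rfl | ⟨h1', h2'⟩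
      · exact absurd rfl hne
      · rw [Set.inter_comm] at h2'
        exact h2'
    · rcases (hmem K').mp hK' with rfl | ⟨h1', h2'⟩
      · exact h2
      · apply Set.eq_empty_iff_forall_notMem.mpr
        rintro x ⟨hxK, hxK'⟩
        have hxA0 : x ∉ A0 := fun hx => by
          have : x ∈ K ∩ A0 := ⟨hxK, hx⟩
          rw [h2] at this
          exact this
        obtain ⟨N, _, hu⟩ := hA0.2 x hxA0
        exact hne ((hu K ⟨h1, hxK, h2⟩).trans (hu K' ⟨h1', hxK', h2'⟩).symm)
  have hU : (⋃ K ∈ G, K) = (Set.univ : Set M) := by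
    apply Set.eq_univ_of_forall
    intro x
    simp only [Set.mem_iUnion]
    by_cases hx : x ∈ A0
    · exact ⟨A0, (hmem A0).mpr (Or.inl rfl), hx⟩
    · obtain ⟨K, ⟨hK1, hK2, hK3⟩, _⟩ := hA0.2 x hx
      exact ⟨K, (hmem K).mpr (Or.inr ⟨hK1, hK3⟩), hK2⟩
  have hcount := ncard_partition G Set.univ hdisjG hU
  have hsum : ∑ K ∈ G, K.ncard = G.card * A0.ncard := by
    calc ∑ K ∈ G, K.ncard = ∑ _K ∈ G, A0.ncard :=
          Finset.sum_congr rfl (fun K hK => (hlines K hK).2)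
      _ = G.card * A0.ncard := by rw [Finset.sum_const, smul_eq_mul]
  exact ⟨G.card, by rw [hcount, hsum, Nat.mul_comm]⟩

end LinearSpace

/-- In a finite linear space in which every line is affine or projective, if both an
affine and a projective line exist, then the affine lines are pairwise disjoint and
every point lies on exactly one affine line. -/
theorem affine_lines_partition {M : Type*} [Finite M] (S : LinearSpace M)
    (hdich : ∀ L ∈ S.lines, S.IsAffine L ∨ S.IsProjective L)
    (hex_aff : ∃ A : Set M, S.IsAffine A)
    (hex_proj : ∃ L : Set M, S.IsProjective L) :
    (∀ A B : Set M, S.IsAffine A → S.IsAffine B → A ≠ B → A ∩ B = ∅) ∧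
    (∀ x : M, ∃! A : Set M, S.IsAffine A ∧ x ∈ A) := by
  classical
  obtain ⟨A0, hA0⟩ := hex_aff
  obtain ⟨P0, hP0⟩ := hex_proj
  have hnpos : 1 ≤ A0.ncard := S.line_ncard_pos hA0.1
  -- the number of projective lines through a point is constant
  have hconst : ∀ p q : M, (S.Pthrough p).ncard = (S.Pthrough q).ncard := by
    intro p q
    have h1 := S.univ_count hdich hA0 hP0 p
    have h2 := S.univ_count hdich hA0 hP0 q
    exact Nat.add_left_cancel (h1 ▸ h2)
  -- a point on P0 has at least one projective line through it
  obtain ⟨z, _, _, hz, _⟩ := S.exists_three_points P0 hP0.1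
  have htz : 1 ≤ (S.Pthrough z).ncard :=
    (Set.ncard_pos (Set.toFinite _)).mpr ⟨P0, hP0, hz⟩
  -- a point on A0 has at least one affine line through it
  obtain ⟨a, _, _, ha, _⟩ := S.exists_three_points A0 hA0.1
  have hapa : 1 ≤ (S.Athrough a).ncard :=
    (Set.ncard_pos (Set.toFinite _)).mpr ⟨A0, hA0, ha⟩
  have hsum_a : (S.Athrough a).ncard + (S.Pthrough a).ncard = A0.ncard + 1 := by
    rw [S.ap_add_tp hdich a, S.LT_ncard hdich hA0 hP0 a]
  have htpos : 1 ≤ (S.Pthrough a).ncard := (hconst z a) ▸ htz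
  have htle : (S.Pthrough a).ncard ≤ A0.ncard := by omega
  -- n divides t
  have hdvd : A0.ncard ∣ (Set.univ : Set M).ncard := S.dvd_univ_ncard hdich hA0 hP0
  have hm := S.univ_count hdich hA0 hP0 a
  have hdvdt : A0.ncard ∣ (S.Pthrough a).ncard := by
    obtain ⟨c, hc⟩ := hdvd
    have hnc : A0.ncard * A0.ncard ≤ A0.ncard * c := by omega
    have hcn : A0.ncard ≤ c := Nat.le_of_mul_le_mul_left hnc (by omega)
    obtain ⟨d, rfl⟩ : ∃ d, c = A0.ncard + d := ⟨c - A0.ncard, by omega⟩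
    have h3 : A0.ncard * A0.ncard + A0.ncard * d
        = A0.ncard * A0.ncard + (S.Pthrough a).ncard := by
      rw [← Nat.mul_add, ← hc, hm]
    exact ⟨d, (Nat.add_left_cancel h3).symm⟩
  have ht : (S.Pthrough a).ncard = A0.ncard :=
    Nat.le_antisymm htle (Nat.le_of_dvd htpos hdvdt)
  -- every point lies on exactly one affine line
  have hax : ∀ x : M, (S.Athrough x).ncard = 1 := by
    intro x
    have h1 : (S.Athrough x).ncard + (S.Pthrough x).ncard = A0.ncard + 1 := by
      rw [S.ap_add_tp hdich x, S.LT_ncard hdich hA0 hP0 x]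
    have h2 : (S.Pthrough x).ncard = A0.ncard := (hconst x a).trans ht
    omega
  have huniq : ∀ x : M, ∃! A : Set M, S.IsAffine A ∧ x ∈ A := by
    intro x
    obtain ⟨A, hA⟩ := Set.ncard_eq_one.mp (hax x)
    have hAmem : A ∈ S.Athrough x := hA ▸ rfl
    refine ⟨A, hAmem, ?_⟩
    intro B hB
    have hBmem : B ∈ S.Athrough x := hB
    rw [hA] at hBmem
    exact hBmem
  refine ⟨?_, huniq⟩
  intro A B hA hB hAB
  by_contra h
  obtain ⟨x, hx⟩ := Set.nonempty_iff_ne_empty.mpr h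
  obtain ⟨C, _, hC⟩ := huniq x
  exact hAB ((hC A ⟨hA, hx.1⟩).trans (hC B ⟨hB, hx.2⟩).symm)
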